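/- Let 𝒞 be a set of n unit vectors in ℝ^d with all pairwise inner products at most α, where 0 ≤ α < 1. For u ∈ 𝒞 let γ(u) = Σ_{v ∈ 𝒞, ⟨u,v⟩ < 0} ⟨u,v⟩. Then Σ_{u ∈ 𝒞} γ(u)² ≤ (27/4)(1 + αn)² n. -/

import Mathlib

open Finset

set_option maxHeartbeats 1000000 in
theorem gamma_sq_sum_bound {d n : ℕ} (α : ℝ) (hα0 : 0 ≤ α) (hα1 : α < 1)
    (𝒞 : Finset (EuclideanSpace ℝ (Fin d))) (hcard : 𝒞.card = n)
    (hunit : ∀ u ∈ 𝒞, ‖u‖ = 1)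
    (hpair : ∀ u ∈ 𝒞, ∀ v ∈ 𝒞, u ≠ v → (inner ℝ u v : ℝ) ≤ α) :
    ∑ u ∈ 𝒞, (∑ v ∈ 𝒞.filter (fun v => (inner ℝ u v : ℝ) < 0), (inner ℝ u v : ℝ)) ^ 2
      ≤ 27 / 4 * (1 + α * n) ^ 2 * n := by
  classical
  set B : ℝ := 1 + α * n with hBdef
  have hn0 : (0:ℝ) ≤ n := Nat.cast_nonneg n
  have hB1 : (1:ℝ) ≤ B := le_add_of_nonneg_right (by positivity)
  have hB0 : (0:ℝ) ≤ B := zero_le_one.trans hB1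
  have hself : ∀ u ∈ 𝒞, (inner ℝ u u : ℝ) = 1 := by
    intro u hu
    have h1 : (inner ℝ u u : ℝ) = ‖u‖ * ‖u‖ := real_inner_self_eq_norm_mul_norm u
    rw [h1, hunit u hu, one_mul]
  set g : EuclideanSpace ℝ (Fin d) → ℝ :=
    fun u => -(∑ v ∈ 𝒞.filter (fun v => (inner ℝ u v : ℝ) < 0), (inner ℝ u v : ℝ)) with hgdef
  set h : EuclideanSpace ℝ (Fin d) → ℝ :=
    fun u => ∑ v ∈ 𝒞.filter (fun v => ¬ (inner ℝ u v : ℝ) < 0), (inner ℝ u v : ℝ) with hhdef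
  have hg0 : ∀ u, 0 ≤ g u := by
    intro u
    have : (∑ v ∈ 𝒞.filter (fun v => (inner ℝ u v : ℝ) < 0), (inner ℝ u v : ℝ)) ≤ 0 :=
      Finset.sum_nonpos (fun v hv => le_of_lt (Finset.mem_filter.mp hv).2)
    simpa [hgdef] using neg_nonneg.mpr this
  have hh0 : ∀ u, 0 ≤ h u := fun u =>
    Finset.sum_nonneg (fun v hv => not_lt.mp (Finset.mem_filter.mp hv).2)
  have hhB : ∀ u ∈ 𝒞, h u ≤ B := by
    intro u hu
    have humem : u ∈ 𝒞.filter (fun v => ¬ (inner ℝ u v : ℝ) < 0) := by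
      refine Finset.mem_filter.mpr ⟨hu, ?_⟩
      rw [hself u hu]
      norm_num
    have hsplit : (inner ℝ u u : ℝ) +
        ∑ v ∈ (𝒞.filter (fun v => ¬ (inner ℝ u v : ℝ) < 0)).erase u, (inner ℝ u v : ℝ) = h u :=
      Finset.add_sum_erase _ _ humem
    have hbound : ∑ v ∈ (𝒞.filter (fun v => ¬ (inner ℝ u v : ℝ) < 0)).erase u,
        (inner ℝ u v : ℝ) ≤ α * n := by
      have h1 : ∑ v ∈ (𝒞.filter (fun v => ¬ (inner ℝ u v : ℝ) < 0)).erase u,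
          (inner ℝ u v : ℝ) ≤ ∑ v ∈ (𝒞.filter (fun v => ¬ (inner ℝ u v : ℝ) < 0)).erase u, α := by
        apply Finset.sum_le_sum
        intro v hv
        have hvne : v ≠ u := Finset.ne_of_mem_erase hv
        have hv𝒞 : v ∈ 𝒞 := (Finset.mem_filter.mp (Finset.mem_of_mem_erase hv)).1
        exact hpair u hu v hv𝒞 (Ne.symm hvne)
      have h2 : ((𝒞.filter (fun v => ¬ (inner ℝ u v : ℝ) < 0)).erase u).card ≤ n := by
        rw [← hcard]
        exact Finset.card_le_card ((Finset.erase_subset _ _).trans (Finset.filter_subset _ _))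
      calc ∑ v ∈ (𝒞.filter (fun v => ¬ (inner ℝ u v : ℝ) < 0)).erase u, (inner ℝ u v : ℝ)
          ≤ ∑ _v ∈ (𝒞.filter (fun v => ¬ (inner ℝ u v : ℝ) < 0)).erase u, α := h1
        _ = ((𝒞.filter (fun v => ¬ (inner ℝ u v : ℝ) < 0)).erase u).card * α := by
            rw [Finset.sum_const, nsmul_eq_mul]
        _ ≤ n * α := by
            apply mul_le_mul_of_nonneg_right _ hα0
            exact_mod_cast h2
        _ = α * n := mul_comm _ _
    have := hself u hu
    linarith [hsplit, hbound, this]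
  set X : EuclideanSpace ℝ (Fin d) := ∑ v ∈ 𝒞, v with hXdef
  set Y : EuclideanSpace ℝ (Fin d) := ∑ u ∈ 𝒞, g u • u with hYdef
  set S : ℝ := ∑ u ∈ 𝒞, g u with hSdef
  set T : ℝ := ∑ u ∈ 𝒞, g u * h u with hTdef
  set G2 : ℝ := ∑ u ∈ 𝒞, (g u)^2 with hG2def
  have hSnn : 0 ≤ S := Finset.sum_nonneg fun u _ => hg0 u
  have hG2nn : 0 ≤ G2 := Finset.sum_nonneg fun u _ => sq_nonneg _
  have hTnn : 0 ≤ T := Finset.sum_nonneg fun u _ => mul_nonneg (hg0 u) (hh0 u)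
  have huX : ∀ u ∈ 𝒞, (inner ℝ u X : ℝ) = h u - g u := by
    intro u hu
    have h1 : (inner ℝ u X : ℝ) = ∑ v ∈ 𝒞, (inner ℝ u v : ℝ) := by
      rw [hXdef, inner_sum]
    rw [h1, ← Finset.sum_filter_add_sum_filter_not 𝒞 (fun v => (inner ℝ u v : ℝ) < 0)]
    simp only [hgdef, hhdef]
    ring
  have hhsum : ∑ u ∈ 𝒞, h u ≤ n * B := by
    calc ∑ u ∈ 𝒞, h u ≤ ∑ _u ∈ 𝒞, B := Finset.sum_le_sum fun u hu => hhB u hu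
      _ = 𝒞.card * B := by rw [Finset.sum_const, nsmul_eq_mul]
      _ = n * B := by rw [hcard]
  have hXX : (inner ℝ X X : ℝ) = (∑ u ∈ 𝒞, h u) - S := by
    have h1 : (inner ℝ X X : ℝ) = ∑ u ∈ 𝒞, (inner ℝ u X : ℝ) := by
      conv_lhs => rw [hXdef]
      rw [sum_inner]
    rw [h1, Finset.sum_congr rfl huX, Finset.sum_sub_distrib, hSdef]
  have hXXnn : (0:ℝ) ≤ inner ℝ X X := real_inner_self_nonneg
  have hSle : S ≤ n * B := by
    have := hXXnn
    rw [hXX] at this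
    linarith [hhsum]
  have hXXle : (inner ℝ X X : ℝ) ≤ n * B := by
    rw [hXX]; linarith [hhsum]
  have huY : ∀ u ∈ 𝒞, (inner ℝ u Y : ℝ) ≤ g u + α * S := by
    intro u hu
    have h1 : (inner ℝ u Y : ℝ) = ∑ v ∈ 𝒞, g v * (inner ℝ u v : ℝ) := by
      rw [hYdef, inner_sum]
      exact Finset.sum_congr rfl fun v _ => real_inner_smul_right _ _ _
    have hsplit : g u * (inner ℝ u u : ℝ) + ∑ v ∈ 𝒞.erase u, g v * (inner ℝ u v : ℝ)
        = ∑ v ∈ 𝒞, g v * (inner ℝ u v : ℝ) :=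
      Finset.add_sum_erase 𝒞 (fun v => g v * (inner ℝ u v : ℝ)) hu
    have h2 : ∑ v ∈ 𝒞.erase u, g v * (inner ℝ u v : ℝ) ≤ α * S := by
      calc ∑ v ∈ 𝒞.erase u, g v * (inner ℝ u v : ℝ)
          ≤ ∑ v ∈ 𝒞.erase u, g v * α := by
            apply Finset.sum_le_sum
            intro v hv
            exact mul_le_mul_of_nonneg_left
              (hpair u hu v (Finset.mem_of_mem_erase hv) (Ne.symm (Finset.ne_of_mem_erase hv)))
              (hg0 v)
        _ = α * ∑ v ∈ 𝒞.erase u, g v := by rw [Finset.mul_sum]; exact Finset.sum_congr rfl fun v _ => mul_comm _ _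
        _ ≤ α * S := by
            apply mul_le_mul_of_nonneg_left _ hα0
            exact Finset.sum_le_sum_of_subset_of_nonneg (Finset.erase_subset _ _)
              (fun v _ _ => hg0 v)
    rw [h1, ← hsplit, hself u hu]
    linarith
  have hYY : (inner ℝ Y Y : ℝ) ≤ G2 + α * S^2 := by
    have h1 : (inner ℝ Y Y : ℝ) = ∑ u ∈ 𝒞, g u * (inner ℝ u Y : ℝ) := by
      conv_lhs => rw [hYdef]
      rw [sum_inner]
      exact Finset.sum_congr rfl fun u _ => real_inner_smul_left _ _ _
    rw [h1]
    calc ∑ u ∈ 𝒞, g u * (inner ℝ u Y : ℝ)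
        ≤ ∑ u ∈ 𝒞, g u * (g u + α * S) :=
          Finset.sum_le_sum fun u hu => mul_le_mul_of_nonneg_left (huY u hu) (hg0 u)
      _ = G2 + α * S^2 := by
          rw [hG2def, hSdef]
          rw [Finset.sum_congr rfl (fun u _ => by ring :
            ∀ u ∈ 𝒞, g u * (g u + α * S) = (g u)^2 + (α * S) * g u)]
          rw [Finset.sum_add_distrib, ← Finset.mul_sum]
          ring
  have hYYnn : (0:ℝ) ≤ inner ℝ Y Y := real_inner_self_nonneg
  have hYX : (inner ℝ Y X : ℝ) = T - G2 := by
    have h1 : (inner ℝ Y X : ℝ) = ∑ u ∈ 𝒞, g u * (inner ℝ u X : ℝ) := by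
      conv_lhs => rw [hYdef]
      rw [sum_inner]
      exact Finset.sum_congr rfl fun u _ => real_inner_smul_left _ _ _
    rw [h1, Finset.sum_congr rfl (fun u hu => by rw [huX u hu])]
    rw [Finset.sum_congr rfl (fun u _ => by ring :
      ∀ u ∈ 𝒞, g u * (h u - g u) = g u * h u - (g u)^2)]
    rw [Finset.sum_sub_distrib, hTdef, hG2def]
  have hCS : (T - G2)^2 ≤ (G2 + α * S^2) * (n * B) := by
    have h1 : (inner ℝ Y X : ℝ) * (inner ℝ Y X : ℝ) ≤ (inner ℝ Y Y : ℝ) * (inner ℝ X X : ℝ) :=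
      real_inner_mul_inner_self_le _ _
    rw [hYX] at h1
    have h2 : (inner ℝ Y Y : ℝ) * (inner ℝ X X : ℝ) ≤ (G2 + α * S^2) * (n * B) :=
      mul_le_mul hYY hXXle hXXnn (by positivity)
    calc (T - G2)^2 = (T - G2) * (T - G2) := by ring
      _ ≤ (inner ℝ Y Y : ℝ) * (inner ℝ X X : ℝ) := h1
      _ ≤ _ := h2
  have hTle : T ≤ B * S := by
    calc T ≤ ∑ u ∈ 𝒞, g u * B := Finset.sum_le_sum fun u hu =>
          mul_le_mul_of_nonneg_left (hhB u hu) (hg0 u)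
      _ = B * S := by rw [hSdef, Finset.mul_sum]; exact Finset.sum_congr rfl fun u _ => mul_comm _ _
  -- now pure algebra
  have hgoal : G2 ≤ 27 / 4 * (n * B^2) := by
    set c : ℝ := n * B^2 with hcdef
    have hcnn : 0 ≤ c := by positivity
    have hTc : T ≤ c := by
      calc T ≤ B * S := hTle
        _ ≤ B * (n * B) := mul_le_mul_of_nonneg_left hSle hB0
        _ = c := by rw [hcdef]; ring
    have hnBc : (n:ℝ) * B ≤ c := by
      rw [hcdef]
      nlinarith [hn0, hB0, hB1]
    have hαS2 : α * S^2 ≤ (B - 1) * c := by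
      have h1 : S^2 ≤ ((n:ℝ)*B)^2 := by nlinarith [hSnn, hSle]
      have h2 : α * S^2 ≤ α * ((n:ℝ)*B)^2 := mul_le_mul_of_nonneg_left h1 hα0
      have h3 : α * ((n:ℝ)*B)^2 = (B - 1) * c := by rw [hcdef, hBdef]; ring
      linarith
    have hkey6 : (T - G2)^2 ≤ G2 * c + c^2 := by
      have h3 : (G2 + α * S^2) * ((n:ℝ) * B) ≤ (G2 + (B-1)*c) * ((n:ℝ) * B) :=
        mul_le_mul_of_nonneg_right (by linarith) (by positivity)
      have h4 : G2 * ((n:ℝ)*B) ≤ G2 * c := mul_le_mul_of_nonneg_left hnBc hG2nn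
      have h51 : (B-1)*((n:ℝ)*B) ≤ c := by
        rw [hcdef]
        nlinarith [hn0, hB0, hB1]
      have h5 : (B-1)*c*((n:ℝ)*B) ≤ c^2 := by
        calc (B-1)*c*((n:ℝ)*B) = ((B-1)*((n:ℝ)*B))*c := by ring
          _ ≤ c*c := mul_le_mul_of_nonneg_right h51 hcnn
          _ = c^2 := by ring
      have h6 : (G2 + (B-1)*c) * ((n:ℝ) * B) = G2 * ((n:ℝ)*B) + (B-1)*c*((n:ℝ)*B) := by ring
      calc (T - G2)^2 ≤ (G2 + α * S^2) * ((n:ℝ) * B) := hCS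
        _ ≤ (G2 + (B-1)*c) * ((n:ℝ) * B) := h3
        _ = G2 * ((n:ℝ)*B) + (B-1)*c*((n:ℝ)*B) := h6
        _ ≤ G2 * c + c^2 := by linarith
    have hquad : G2^2 ≤ 3*c*G2 + c^2 := by
      nlinarith [hkey6, mul_le_mul_of_nonneg_right hTc hG2nn, sq_nonneg T]
    nlinarith [hquad, hcnn, hG2nn, sq_nonneg (G2 - 4*c), sq_nonneg c, mul_nonneg hcnn hG2nn]
  have hfinal : ∑ u ∈ 𝒞, (∑ v ∈ 𝒞.filter (fun v => (inner ℝ u v : ℝ) < 0), (inner ℝ u v : ℝ)) ^ 2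
      = G2 := by
    rw [hG2def]
    refine Finset.sum_congr rfl fun u _ => ?_
    simp only [hgdef]
    ring
  rw [hfinal]
  calc G2 ≤ 27 / 4 * (n * B^2) := hgoal
    _ = 27 / 4 * B^2 * n := by ring
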